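/- Along the compressive branch, for every ρ ∈ (ρ_r, η ρ_r) the sound speed c(ρ) = √(γ p(ρ)/ρ) satisfies dc/dρ = c_r √(ρ_r) · ((ρ − ρ_r)² + (η−1)(ρ² + ρ_r²)) / (2 ρ^{3/2} (η ρ_r − ρ)^{3/2} (η ρ − ρ_r)^{1/2}), and this derivative is strictly positive. -/

import Mathlib

/-- Explicit derivative formula for the sound speed along the compressive branch,
and its strict positivity. -/
theorem stmt2 (γ ρr ur pr η cr : ℝ)
    (hγ : 1 < γ) (hρr : 0 < ρr) (hpr : 0 < pr)
    (hη : η = (γ + 1) / (γ - 1))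
    (hcr : cr = Real.sqrt (γ * pr / ρr))
    (p u c : ℝ → ℝ)
    (hp : ∀ ρ, p ρ = pr * (η * ρ - ρr) / (η * ρr - ρ))
    (hu : ∀ ρ, u ρ = ur + cr * Real.sqrt (2 / (γ - 1)) * (ρ - ρr)
        / Real.sqrt ((η * ρr - ρ) * ρ))
    (hc : ∀ ρ, c ρ = Real.sqrt (γ * p ρ / ρ)) :
    ∀ ρ ∈ Set.Ioo ρr (η * ρr),
      HasDerivAt c
        (cr * Real.sqrt ρr * ((ρ - ρr) ^ 2 + (η - 1) * (ρ ^ 2 + ρr ^ 2))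
          / (2 * ρ ^ ((3 : ℝ) / 2) * (η * ρr - ρ) ^ ((3 : ℝ) / 2)
              * (η * ρ - ρr) ^ ((1 : ℝ) / 2))) ρ
      ∧ 0 < cr * Real.sqrt ρr * ((ρ - ρr) ^ 2 + (η - 1) * (ρ ^ 2 + ρr ^ 2))
          / (2 * ρ ^ ((3 : ℝ) / 2) * (η * ρr - ρ) ^ ((3 : ℝ) / 2)
              * (η * ρ - ρr) ^ ((1 : ℝ) / 2)) := by
  intro ρ hρmem
  obtain ⟨hlo, hhi⟩ := hρmem
  have hγ1 : (0:ℝ) < γ - 1 := by linarith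
  have hη1 : 1 < η := by
    rw [hη, lt_div_iff₀ hγ1]; linarith
  have hρ : 0 < ρ := lt_trans hρr hlo
  have h1 : 0 < η * ρr - ρ := by linarith
  have h2 : 0 < η * ρ - ρr := by nlinarith
  set S1 := Real.sqrt ρ with hS1def
  set S2 := Real.sqrt (η * ρr - ρ) with hS2def
  set S3 := Real.sqrt (η * ρ - ρr) with hS3def
  have hS1 : 0 < S1 := Real.sqrt_pos.mpr hρ
  have hS2 : 0 < S2 := Real.sqrt_pos.mpr h1
  have hS3 : 0 < S3 := Real.sqrt_pos.mpr h2
  have hS1sq : S1 ^ 2 = ρ := Real.sq_sqrt hρ.le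
  have hS2sq : S2 ^ 2 = η * ρr - ρ := Real.sq_sqrt h1.le
  have hS3sq : S3 ^ 2 = η * ρ - ρr := Real.sq_sqrt h2.le
  have hQpos : 0 < γ * pr := mul_pos (by linarith) hpr
  set Q := Real.sqrt (γ * pr) with hQdef
  have hQ : 0 < Q := Real.sqrt_pos.mpr hQpos
  have hQsq : Q ^ 2 = γ * pr := Real.sq_sqrt hQpos.le
  have hcrQ : cr * Real.sqrt ρr = Q := by
    rw [hcr, hQdef, ← Real.sqrt_mul (by positivity), div_mul_cancel₀]
    exact hρr.ne'
  have hcrpos : 0 < cr := by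
    rw [hcr]; exact Real.sqrt_pos.mpr (by positivity)
  have hA : 0 < (ρ - ρr) ^ 2 + (η - 1) * (ρ ^ 2 + ρr ^ 2) := by nlinarith
  have hρ32 : ρ ^ ((3 : ℝ) / 2) = ρ * S1 := by
    rw [show (3:ℝ)/2 = 1 + 1/2 by norm_num, Real.rpow_add hρ, Real.rpow_one,
      hS1def, Real.sqrt_eq_rpow]
  have h132 : (η * ρr - ρ) ^ ((3 : ℝ) / 2) = (η * ρr - ρ) * S2 := by
    rw [show (3:ℝ)/2 = 1 + 1/2 by norm_num, Real.rpow_add h1, Real.rpow_one,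
      hS2def, Real.sqrt_eq_rpow]
  have h212 : (η * ρ - ρr) ^ ((1 : ℝ) / 2) = S3 := by
    rw [hS3def, Real.sqrt_eq_rpow]
  have hpos : 0 < cr * Real.sqrt ρr * ((ρ - ρr) ^ 2 + (η - 1) * (ρ ^ 2 + ρr ^ 2))
      / (2 * ρ ^ ((3 : ℝ) / 2) * (η * ρr - ρ) ^ ((3 : ℝ) / 2)
        * (η * ρ - ρr) ^ ((1 : ℝ) / 2)) := by
    rw [hρ32, h132, h212]
    have hsr : 0 < Real.sqrt ρr := Real.sqrt_pos.mpr hρr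
    positivity
  refine ⟨?_, hpos⟩
  have hcfun : c = fun x => Real.sqrt (γ * (pr * (η * x - ρr) / (η * ρr - x)) / x) := by
    funext x; rw [hc, hp]
  rw [hcfun]
  have h_num : HasDerivAt (fun x : ℝ => pr * (η * x - ρr)) (pr * η) ρ := by
    simpa using (((hasDerivAt_id ρ).const_mul η).sub_const ρr).const_mul pr
  have h_den : HasDerivAt (fun x : ℝ => η * ρr - x) (-1) ρ := by
    simpa using (hasDerivAt_id ρ).const_sub (η * ρr)
  have h_p : HasDerivAt (fun x : ℝ => pr * (η * x - ρr) / (η * ρr - x))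
      ((pr * η * (η * ρr - ρ) - pr * (η * ρ - ρr) * (-1)) / (η * ρr - ρ) ^ 2) ρ :=
    h_num.div h_den h1.ne'
  have h_f : HasDerivAt (fun x : ℝ => γ * (pr * (η * x - ρr) / (η * ρr - x)) / x)
      ((γ * ((pr * η * (η * ρr - ρ) - pr * (η * ρ - ρr) * (-1)) / (η * ρr - ρ) ^ 2) * ρ
        - γ * (pr * (η * ρ - ρr) / (η * ρr - ρ)) * 1) / ρ ^ 2) ρ :=
    (h_p.const_mul γ).div (hasDerivAt_id ρ) hρ.ne'
  have hfvalpos : 0 < γ * (pr * (η * ρ - ρr) / (η * ρr - ρ)) / ρ := by positivity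
  have h_sqrt := h_f.sqrt hfvalpos.ne'
  have hsf : Real.sqrt (γ * (pr * (η * ρ - ρr) / (η * ρr - ρ)) / ρ) = Q * S3 / (S2 * S1) := by
    rw [show γ * (pr * (η * ρ - ρr) / (η * ρr - ρ)) / ρ
        = (γ * pr) * (η * ρ - ρr) / ((η * ρr - ρ) * ρ) by field_simp]
    rw [Real.sqrt_div (by positivity), Real.sqrt_mul hQpos.le, Real.sqrt_mul h1.le]
  rw [hsf] at h_sqrt
  convert h_sqrt using 1
  rw [hcrQ, hρ32, h132, h212]
  rw [← hS3sq, ← hS2sq]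
  rw [← hS1sq]
  have hγ0 : γ ≠ 0 := by linarith
  rw [show pr = Q ^ 2 / γ by rw [hQsq]; field_simp]
  have hb : S2 ^ 2 = η * ρr - S1 ^ 2 := by rw [hS2sq, hS1sq]
  have hc3 : S3 ^ 2 = η * S1 ^ 2 - ρr := by rw [hS3sq, hS1sq]
  field_simp
  linear_combination
    (S3 ^ 2 - η * S1 ^ 2) * hb
    + (η * ρr - 2 * S1 ^ 2) * hc3
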